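/- Let K ⊆ ℂ be a number field with K ⊄ ℝ. If K is not a CM-field, then there exists a unit u ∈ O_K^× such that u^n ∉ ℝ for every nonzero integer n. -/

import Mathlib

noncomputable section

open NumberField IsDedekindDomain
open scoped Multiplicative

variable (K : Type*) [Field K] [NumberField K]

/-- The places in `S`: all the infinite places of `K` together with the
finite places lying in a finite set `S₀`. -/
abbrev SPlace (S₀ : Finset (HeightOneSpectrum (𝓞 K))) : Type _ :=
  InfinitePlace K ⊕ {v // v ∈ S₀}

variable (S₀ : Finset (HeightOneSpectrum (𝓞 K)))

/-- The completion of `K` at a place of `S`. -/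
def SComp : SPlace K S₀ → Type _
  | .inl w => w.1.Completion
  | .inr v => v.1.adicCompletion K

instance : ∀ p : SPlace K S₀, CommRing (SComp K S₀ p)
  | .inl w => inferInstanceAs (CommRing w.1.Completion)
  | .inr v => inferInstanceAs (CommRing (v.1.adicCompletion K))

instance : ∀ p : SPlace K S₀, TopologicalSpace (SComp K S₀ p)
  | .inl w => inferInstanceAs (TopologicalSpace w.1.Completion)
  | .inr v => inferInstanceAs (TopologicalSpace (v.1.adicCompletion K))

instance : ∀ p : SPlace K S₀, IsTopologicalRing (SComp K S₀ p)
  | .inl w => inferInstanceAs (IsTopologicalRing w.1.Completion)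
  | .inr v => inferInstanceAs (IsTopologicalRing (v.1.adicCompletion K))

/-- The diagonal embedding of `K` into the product of its completions at places of `S`. -/
def SDiag : K →+* ∀ p : SPlace K S₀, SComp K S₀ p :=
  Pi.ringHom fun p => match p with
    | .inl w => algebraMap K w.1.Completion
    | .inr v => algebraMap K (v.1.adicCompletion K)

/-- The normalized absolute value at a place of `S`, extended to the completion.
At a real place it is the usual absolute value, at a complex place the square of
the modulus, and at a finite place `v` it is `(Nv)^(-v(x))`. -/
def SAbs : ∀ p : SPlace K S₀, SComp K S₀ p → ℝ
  | .inl w => fun x : w.1.Completion => ‖x‖ ^ w.mult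
  | .inr v => fun x : v.1.adicCompletion K =>
      if h : (Valued.v x : WithZero (Multiplicative ℤ)) = 0 then 0
      else (Nat.card (𝓞 K ⧸ v.1.asIdeal) : ℝ) ^ (Multiplicative.toAdd (WithZero.unzero h))

/-- The `S`-norm on the product of the completions. -/
def SNorm (ξ : ∀ p : SPlace K S₀, SComp K S₀ p) : ℝ :=
  ∏ p : SPlace K S₀, SAbs K S₀ p (ξ p)

/-- The ring of `S`-integers of `K`. -/
def SInt : Subring K where
  carrier := {x | ∀ v : HeightOneSpectrum (𝓞 K), v ∉ S₀ → v.valuation K x ≤ 1}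
  one_mem' := fun v _ => le_of_eq (map_one _)
  mul_mem' := fun ha hb v hv => by
    rw [Set.mem_setOf_eq] at *
    rw [map_mul]; exact mul_le_one' (ha v hv) (hb v hv)
  zero_mem' := fun v _ => by simp
  add_mem' := fun ha hb v hv => le_trans (Valuation.map_add _ _ _) (max_le (ha v hv) (hb v hv))
  neg_mem' := fun ha v hv => by
    rw [Set.mem_setOf_eq] at *
    rw [Valuation.map_neg]; exact ha v hv

/-- The `S`-norm of a nonzero ideal of the `S`-integers: the cardinality of the quotient. -/
def SIdealNorm (a : Ideal (SInt K S₀)) : ℝ := (Nat.card (SInt K S₀ ⧸ a) : ℝ)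

/-- `m_a^S (ξ) = N_S(a)⁻¹ ⬝ inf_{γ ∈ a} N_S (ξ - γ)`. -/
def mS (a : Ideal (SInt K S₀)) (ξ : ∀ p : SPlace K S₀, SComp K S₀ p) : ℝ :=
  (SIdealNorm K S₀ a)⁻¹ * ⨅ γ : a, SNorm K S₀ (ξ - SDiag K S₀ ((γ : SInt K S₀) : K))

/-- The `S`-Euclidean minimum of the ideal `a`. -/
def MS (a : Ideal (SInt K S₀)) : ℝ := ⨆ ξ : K, mS K S₀ a (SDiag K S₀ ξ)

/-- The `S`-inhomogeneous minimum of the ideal `a`. -/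
def MbarS (a : Ideal (SInt K S₀)) : ℝ := ⨆ ξ : ∀ p : SPlace K S₀, SComp K S₀ p, mS K S₀ a ξ

/-- The ideal `a`, embedded diagonally as an additive subgroup of `K̄_S`. -/
def aSub (a : Ideal (SInt K S₀)) : AddSubgroup (∀ p : SPlace K S₀, SComp K S₀ p) :=
  AddSubgroup.map ((SDiag K S₀).comp (SInt K S₀).subtype).toAddMonoidHom a.toAddSubgroup

/-- The compact group `𝕋 = K̄_S / a`. -/
abbrev TS (a : Ideal (SInt K S₀)) : Type _ :=
  (∀ p : SPlace K S₀, SComp K S₀ p) ⧸ aSub K S₀ a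

/-- The inclusion of the completion at a place `w ∈ S` into `K̄_S`, sending `x` to the
vector which is `x` in the `w`-component and `0` elsewhere. -/
def singleAt (w : SPlace K S₀) (x : SComp K S₀ w) : ∀ p : SPlace K S₀, SComp K S₀ p :=
  letI := Classical.decEq (SPlace K S₀)
  Pi.single w x

/-- The orbit of the class of `ξ` in `𝕋` under the multiplication action of the `S`-units. -/
def SOrb (a : Ideal (SInt K S₀)) (ξ : ∀ p : SPlace K S₀, SComp K S₀ p) : Set (TS K S₀ a) :=
  {y | ∃ u : (SInt K S₀)ˣ, y = (QuotientAddGroup.mk (SDiag K S₀ ((u : SInt K S₀) : K) * ξ) : TS K S₀ a)}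

/-- `K` is a CM-field: `K` is totally complex and is a quadratic extension of a
totally real subfield. -/
def IsCMField : Prop :=
  (∀ w : InfinitePlace K, w.IsComplex) ∧
    ∃ F : IntermediateField ℚ K,
      (∀ φ : F →+* ℂ, ∀ x : F, ∃ r : ℝ, φ x = (r : ℂ)) ∧ Module.finrank F K = 2

/-- The maximal totally real subfield `K⁺` of `K`. -/
def maxTotallyReal : IntermediateField ℚ K :=
  sSup {F : IntermediateField ℚ K | ∀ φ : F →+* ℂ, ∀ x : F, ∃ r : ℝ, φ x = (r : ℂ)}

/-- A finite prime `v` of `K` splits in `K/K⁺` if some other prime of `K` has the same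
valuation ring on `K⁺`, i.e. lies over the same prime of `K⁺`. -/
def SplitsInQuadratic (v : HeightOneSpectrum (𝓞 K)) : Prop :=
  ∃ w : HeightOneSpectrum (𝓞 K), w ≠ v ∧
    ∀ x : maxTotallyReal K, (v.valuation K (x : K) ≤ 1 ↔ w.valuation K (x : K) ≤ 1)

/-- Multiplication by the `S`-unit `u` as a map `𝕋 → 𝕋`. -/
def TSmul (a : Ideal (SInt K S₀)) (u : (SInt K S₀)ˣ) : TS K S₀ a → TS K S₀ a :=
  QuotientAddGroup.map (aSub K S₀ a) (aSub K S₀ a)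
    (AddMonoidHom.mulLeft (SDiag K S₀ ((u : SInt K S₀) : K)))
    (by
      rintro x ⟨γ, hγ, rfl⟩
      exact ⟨(u : SInt K S₀) * γ, Ideal.mul_mem_left a _ (by simpa using hγ),
        by simp [map_mul]⟩)

/-- The set of points of `𝕋` where `m_a^S` attains the inhomogeneous minimum. -/
def minSet (a : Ideal (SInt K S₀)) : Set (TS K S₀ a) :=
  {t : TS K S₀ a | ∃ ξ, (QuotientAddGroup.mk ξ : TS K S₀ a) = t ∧ mS K S₀ a ξ = MbarS K S₀ a}

instance TSMeasurableSpace (a : Ideal (SInt K S₀)) : MeasurableSpace (TS K S₀ a) :=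
  borel _


section Aux17

open Module

set_option maxSynthPendingDepth 2

private theorem aux17_finrank_le {M N : Type*} [AddCommGroup M] [AddCommGroup N]
    [Module.Free ℤ M] [Module.Free ℤ N] [Module.Finite ℤ M] [Module.Finite ℤ N]
    (ψ : M →ₗ[ℤ] N) (h : ∀ y : N, ∃ k : ℤ, k ≠ 0 ∧ k • y ∈ LinearMap.range ψ) :
    Module.finrank ℤ N ≤ Module.finrank ℤ M := by
  have hsurj : Function.Surjective (ψ.baseChange ℚ) := by
    intro z
    have hz : z ∈ LinearMap.range (ψ.baseChange ℚ) := by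
      induction z using TensorProduct.induction_on with
      | zero => exact Submodule.zero_mem _
      | tmul q n =>
        obtain ⟨k, hk, m, hm⟩ := h n
        have h1 : (ψ.baseChange ℚ) (q ⊗ₜ m) = k • (q ⊗ₜ[ℤ] n) := by
          rw [LinearMap.baseChange_tmul, hm, TensorProduct.tmul_smul]
        have h2 : q ⊗ₜ[ℤ] n = ((k : ℚ)⁻¹ * (k : ℚ)) • (q ⊗ₜ[ℤ] n) := by
          rw [inv_mul_cancel₀ (by exact_mod_cast hk), one_smul]
        rw [h2, mul_smul]
        refine Submodule.smul_mem _ _ ?_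
        rw [Int.cast_smul_eq_zsmul]
        exact ⟨q ⊗ₜ m, h1⟩
      | add x y hx hy => exact Submodule.add_mem _ hx hy
    exact hz
  have h1 := LinearMap.finrank_range_le (ψ.baseChange ℚ)
  rw [LinearMap.range_eq_top.mpr hsurj, finrank_top] at h1
  rw [← Module.finrank_baseChange (R := ℚ) (S := ℤ) (M' := N),
    ← Module.finrank_baseChange (R := ℚ) (S := ℤ) (M' := M)]
  exact h1

private theorem aux17_card_le (F K : Type*) [Field F] [Field K] [NumberField F] [NumberField K]
    (h : (𝓞 F)ˣ →* (𝓞 K)ˣ)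
    (hpow : ∀ u : (𝓞 K)ˣ, ∃ n : ℕ, n ≠ 0 ∧ ∃ v : (𝓞 F)ˣ, h v = u ^ n) :
    Fintype.card (InfinitePlace K) ≤ Fintype.card (InfinitePlace F) := by
  have hle : Units.torsion F ≤ Subgroup.comap h (Units.torsion K) := by
    intro v hv
    obtain ⟨n, hn, hvn⟩ := isOfFinOrder_iff_pow_eq_one.mp hv
    exact isOfFinOrder_iff_pow_eq_one.mpr ⟨n, hn, by rw [← map_pow, hvn, map_one]⟩
  let q : ((𝓞 F)ˣ ⧸ Units.torsion F) →* ((𝓞 K)ˣ ⧸ Units.torsion K) :=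
    QuotientGroup.map _ _ h hle
  let ψ : Additive ((𝓞 F)ˣ ⧸ Units.torsion F) →ₗ[ℤ] Additive ((𝓞 K)ˣ ⧸ Units.torsion K) :=
    (MonoidHom.toAdditive q).toIntLinearMap
  have key : ∀ y, ∃ k : ℤ, k ≠ 0 ∧ k • y ∈ LinearMap.range ψ := by
    intro y
    obtain ⟨u, hu⟩ := QuotientGroup.mk_surjective (Additive.toMul y)
    obtain ⟨n, hn, v, hv⟩ := hpow u
    refine ⟨(n : ℤ), by exact_mod_cast hn, Additive.ofMul (QuotientGroup.mk v), ?_⟩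
    have : ψ (Additive.ofMul (QuotientGroup.mk v)) = Additive.ofMul (q (QuotientGroup.mk v)) := rfl
    rw [this, QuotientGroup.map_mk, hv, natCast_zsmul]
    have hy : y = Additive.ofMul (QuotientGroup.mk u : (𝓞 K)ˣ ⧸ Units.torsion K) := by
      rw [hu]; rfl
    rw [hy, ← ofMul_pow]
    exact congrArg Additive.ofMul (map_pow (QuotientGroup.mk' (Units.torsion K)) u n)
  have h1 := aux17_finrank_le ψ key
  rw [Units.rank_modTorsion, Units.rank_modTorsion] at h1
  have h3 : 0 < Fintype.card (InfinitePlace K) := Fintype.card_pos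
  have h4 : 0 < Fintype.card (InfinitePlace F) := Fintype.card_pos
  unfold Units.rank at h1
  omega

private def aux17F {K : Type*} [Field K] [NumberField K] (f : K →+* ℂ) :
    IntermediateField ℚ K where
  carrier := {x : K | f x ∈ Set.range ((↑) : ℝ → ℂ)}
  mul_mem' := by
    rintro a b ⟨r, hr⟩ ⟨s, hs⟩
    exact ⟨r * s, by rw [Complex.ofReal_mul, hr, hs, ← map_mul]⟩
  one_mem' := ⟨1, by rw [Complex.ofReal_one, map_one]⟩
  add_mem' := by
    rintro a b ⟨r, hr⟩ ⟨s, hs⟩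
    exact ⟨r + s, by rw [Complex.ofReal_add, hr, hs, ← map_add]⟩
  zero_mem' := ⟨0, by rw [Complex.ofReal_zero, map_zero]⟩
  algebraMap_mem' := fun q => ⟨(q : ℝ), by
    have h1 : f ((algebraMap ℚ K) q) = ((algebraMap ℚ ℂ) q) := by
      rw [← RingHom.comp_apply]
      exact RingHom.congr_fun (Subsingleton.elim _ _) q
    rw [h1, eq_ratCast, Complex.ofReal_ratCast]⟩
  inv_mem' := by
    rintro x ⟨r, hr⟩
    exact ⟨r⁻¹, by rw [Complex.ofReal_inv, hr, ← map_inv₀]⟩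

private theorem aux17F_mem {K : Type*} [Field K] [NumberField K] (f : K →+* ℂ) (x : K) :
    x ∈ aux17F f ↔ f x ∈ Set.range ((↑) : ℝ → ℂ) := Iff.rfl

end Aux17

set_option maxSynthPendingDepth 2

/-- Let `K ⊆ ℂ` be a number field with `K ⊄ ℝ`.  If `K` is not a
CM-field, then there is a unit `u` of `O_K` with `u^n ∉ ℝ` for every nonzero integer `n`. -/
theorem exists_unit_powers_not_real
    (f : K →+* ℂ) (hKR : ∃ x : K, f x ∉ Set.range ((↑) : ℝ → ℂ))
    (hCM : ¬ _root_.IsCMField K) :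
    ∃ u : (𝓞 K)ˣ, ∀ n : ℤ, n ≠ 0 →
      (f ((u : 𝓞 K) : K)) ^ n ∉ Set.range ((↑) : ℝ → ℂ) := by
  by_contra hcon
  push_neg at hcon
  classical
  set F := aux17F f with hF
  letI : NumberField (↥F) := inferInstance
  let g : (𝓞 (↥F)) →+* (𝓞 K) := RingOfIntegers.mapRingHom (algebraMap (↥F) K)
  let h : (𝓞 (↥F))ˣ →* (𝓞 K)ˣ := Units.map g.toMonoidHom
  have hinj : Function.Injective (algebraMap (↥F) K) := (algebraMap (↥F) K).injective
  have hpow : ∀ u : (𝓞 K)ˣ, ∃ n : ℕ, n ≠ 0 ∧ ∃ v : (𝓞 (↥F))ˣ, h v = u ^ n := by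
    intro u
    obtain ⟨n, hn, hmem0⟩ := hcon u
    refine ⟨n.natAbs, Int.natAbs_ne_zero.mpr hn, ?_⟩
    set z := f (((u : (𝓞 K)ˣ) : 𝓞 K) : K) with hz
    have hmem : z ^ n.natAbs ∈ Set.range ((↑) : ℝ → ℂ) := by
      obtain ⟨r, hr⟩ := hmem0
      rcases Int.natAbs_eq n with he | he
      · rw [he, zpow_natCast] at hr; exact ⟨r, hr⟩
      · rw [he, zpow_neg, zpow_natCast] at hr
        exact ⟨r⁻¹, by rw [Complex.ofReal_inv, hr, inv_inv]⟩
    set m := n.natAbs with hm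
    set w := u ^ m with hw
    have hcoeW : (((w : 𝓞 K)) : K) = ((((u : (𝓞 K)ˣ) : 𝓞 K) : K)) ^ m := by
      rw [hw, Units.val_pow_eq_pow_val]
      exact map_pow (algebraMap (𝓞 K) K) _ m
    have hfw : f (((w : 𝓞 K)) : K) = z ^ m := by rw [hcoeW, map_pow]
    have h1 : (((w : 𝓞 K)) : K) * ((((w⁻¹ : (𝓞 K)ˣ) : 𝓞 K)) : K) = 1 := by
      rw [← map_mul, ← Units.val_mul, mul_inv_cancel, Units.val_one, map_one]
    have h1' : ((((w⁻¹ : (𝓞 K)ˣ) : 𝓞 K)) : K) * (((w : 𝓞 K)) : K) = 1 := by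
      rw [mul_comm]; exact h1
    have hfwinv : f ((((w⁻¹ : (𝓞 K)ˣ) : 𝓞 K)) : K) = (z ^ m)⁻¹ := by
      have h2 := congrArg f h1
      rw [map_mul, map_one] at h2
      rw [← hfw]
      exact eq_inv_of_mul_eq_one_right h2
    have hwF : (((w : 𝓞 K)) : K) ∈ F := by
      rw [hF, aux17F_mem, hfw]; exact hmem
    have hwinvF : ((((w⁻¹ : (𝓞 K)ˣ) : 𝓞 K)) : K) ∈ F := by
      rw [hF, aux17F_mem, hfwinv]
      obtain ⟨r, hr⟩ := hmem
      exact ⟨r⁻¹, by rw [Complex.ofReal_inv, hr]⟩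
    have hIntW : IsIntegral ℤ ((⟨(((w : 𝓞 K)) : K), hwF⟩ : ↥F)) := by
      rw [← isIntegral_algebraMap_iff hinj]
      exact (w : 𝓞 K).isIntegral_coe
    have hIntWinv : IsIntegral ℤ ((⟨((((w⁻¹ : (𝓞 K)ˣ) : 𝓞 K)) : K), hwinvF⟩ : ↥F)) := by
      rw [← isIntegral_algebraMap_iff hinj]
      exact ((w⁻¹ : (𝓞 K)ˣ) : 𝓞 K).isIntegral_coe
    let a : 𝓞 (↥F) := ⟨⟨_, hwF⟩, hIntW⟩
    let b : 𝓞 (↥F) := ⟨⟨_, hwinvF⟩, hIntWinv⟩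
    have hab : a * b = 1 := by
      apply RingOfIntegers.ext
      exact Subtype.ext h1
    have hba : b * a = 1 := by
      apply RingOfIntegers.ext
      exact Subtype.ext h1'
    refine ⟨⟨a, b, hab, hba⟩, ?_⟩
    apply Units.ext
    show g a = ((u ^ m : (𝓞 K)ˣ) : 𝓞 K)
    apply RingOfIntegers.ext
    rfl
  have hcard := aux17_card_le (↥F) K h hpow
  -- counting argument
  have hdK : ∑ w : InfinitePlace K, w.mult = Module.finrank ℚ K :=
    InfinitePlace.sum_mult_eq (K := K)
  have hdF : ∑ w : InfinitePlace (↥F), w.mult = Module.finrank ℚ (↥F) :=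
    InfinitePlace.sum_mult_eq (K := ↥F)
  have hmul : Module.finrank ℚ (↥F) * Module.finrank (↥F) K = Module.finrank ℚ K :=
    Module.finrank_mul_finrank ℚ (↥F) K
  have hFpos : 0 < Module.finrank ℚ (↥F) := Module.finrank_pos
  have hepos : 0 < Module.finrank (↥F) K := Module.finrank_pos
  have he1 : Module.finrank (↥F) K ≠ 1 := by
    intro h1
    obtain ⟨x, hx⟩ := hKR
    have hbt : (⊥ : IntermediateField (↥F) K) = ⊤ := by
      apply IntermediateField.bot_eq_top_of_finrank_adjoin_le_one
      intro y
      have hd := Module.finrank_mul_finrank (↥F) (↥(IntermediateField.adjoin (↥F) {y})) K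
      rw [h1] at hd
      exact Nat.le_of_dvd one_pos ⟨_, hd.symm⟩
    have hxbot : x ∈ (⊥ : IntermediateField (↥F) K) := hbt.symm ▸ IntermediateField.mem_top
    obtain ⟨y, hy⟩ := IntermediateField.mem_bot.mp hxbot
    apply hx
    rw [← hy]
    exact y.2
  have he2 : 2 ≤ Module.finrank (↥F) K := by omega
  have hcF_le : Fintype.card (InfinitePlace (↥F)) ≤ Module.finrank ℚ (↥F) := by
    rw [← hdF]
    calc Fintype.card (InfinitePlace (↥F)) = ∑ _w : InfinitePlace (↥F), 1 := by
          simp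
      _ ≤ ∑ w : InfinitePlace (↥F), w.mult :=
          Finset.sum_le_sum (fun w _ => InfinitePlace.mult_pos)
  have hmult_le : ∀ w : InfinitePlace K, w.mult ≤ 2 := by
    intro w
    rw [InfinitePlace.mult]
    split_ifs <;> omega
  have hdK_le : Module.finrank ℚ K ≤ 2 * Fintype.card (InfinitePlace K) := by
    rw [← hdK]
    calc ∑ w : InfinitePlace K, w.mult ≤ ∑ _w : InfinitePlace K, 2 :=
          Finset.sum_le_sum (fun w _ => hmult_le w)
      _ = 2 * Fintype.card (InfinitePlace K) := by
          rw [Finset.sum_const, smul_eq_mul, mul_comm, Finset.card_univ]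
  have h2dF : Module.finrank ℚ (↥F) * 2 ≤ Module.finrank ℚ K := by
    calc Module.finrank ℚ (↥F) * 2 ≤ Module.finrank ℚ (↥F) * Module.finrank (↥F) K :=
          Nat.mul_le_mul_left _ he2
      _ = Module.finrank ℚ K := hmul
  have hAll : Module.finrank ℚ K = 2 * Fintype.card (InfinitePlace K) ∧
      Fintype.card (InfinitePlace K) = Fintype.card (InfinitePlace (↥F)) ∧
      Fintype.card (InfinitePlace (↥F)) = Module.finrank ℚ (↥F) := by
    omega
  obtain ⟨hA1, hA2, hA3⟩ := hAll
  have he2' : Module.finrank (↥F) K = 2 := by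
    have : Module.finrank ℚ (↥F) * Module.finrank (↥F) K = Module.finrank ℚ (↥F) * 2 := by
      omega
    exact Nat.eq_of_mul_eq_mul_left hFpos this
  -- all infinite places of K are complex
  have hKcomplex : ∀ w : InfinitePlace K, w.IsComplex := by
    have hsum : ∑ w : InfinitePlace K, w.mult = ∑ _w : InfinitePlace K, 2 := by
      rw [hdK, Finset.sum_const, smul_eq_mul, mul_comm, Finset.card_univ, hA1]
    have := (Finset.sum_eq_sum_iff_of_le (fun w _ => hmult_le w)).mp hsum
    intro w
    rw [← InfinitePlace.not_isReal_iff_isComplex]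
    intro hre
    have h2 := this w (Finset.mem_univ w)
    rw [InfinitePlace.mult, if_pos hre] at h2
    omega
  -- all infinite places of F are real
  have hFreal : ∀ w : InfinitePlace (↥F), w.IsReal := by
    have hsum : ∑ _w : InfinitePlace (↥F), 1 = ∑ w : InfinitePlace (↥F), w.mult := by
      rw [hdF, Finset.sum_const, smul_eq_mul, mul_one, Finset.card_univ, hA3]
    have := (Finset.sum_eq_sum_iff_of_le
      (fun (w : InfinitePlace (↥F)) _ => InfinitePlace.mult_pos)).mp hsum
    intro w
    by_contra hre
    have h2 := this w (Finset.mem_univ w)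
    rw [InfinitePlace.mult, if_neg hre] at h2
    omega
  apply hCM
  refine ⟨hKcomplex, F, ?_, he2'⟩
  intro φ x
  have hre : (InfinitePlace.mk φ).IsReal := hFreal _
  rw [InfinitePlace.isReal_mk_iff] at hre
  have hconj : (starRingEnd ℂ) (φ x) = φ x := by
    have := NumberField.ComplexEmbedding.isReal_iff.mp hre
    exact RingHom.congr_fun this x
  obtain ⟨r, hr⟩ := Complex.conj_eq_iff_real.mp hconj
  exact ⟨r, hr⟩
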